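/- Let s : ℝ^i ∖ {0} → S^{i-1} × ℝ^i be the map s(y) = (y/‖y‖, y), and let γ = {(x, y) ∈ S^{i-1} × ℝ^i : ∃ t ∈ [0,∞), y = t·x} be the tautological half-line bundle over S^{i-1}. Then the closure of the image of s in S^{i-1} × ℝ^i equals γ. -/

import Mathlib

/-- The closure in `S^{i-1} × ℝⁱ` (here taken inside `ℝⁱ × ℝⁱ`, which gives the
same set since `S^{i-1} × ℝⁱ` is closed) of the image of
`s : ℝⁱ ∖ {0} → S^{i-1} × ℝⁱ`, `s(y) = (y/‖y‖, y)`, equals the tautological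
half-line bundle `γ = {(x,y) : ‖x‖ = 1, ∃ t ≥ 0, y = t • x}`. -/
theorem closure_graph_radial_projection (i : ℕ) (hi : 1 ≤ i) :
    closure ((fun y : EuclideanSpace ℝ (Fin i) =>
        ((‖y‖⁻¹ • y, y) : EuclideanSpace ℝ (Fin i) × EuclideanSpace ℝ (Fin i))) ''
      {y : EuclideanSpace ℝ (Fin i) | y ≠ 0}) =
    {p : EuclideanSpace ℝ (Fin i) × EuclideanSpace ℝ (Fin i) |
      ‖p.1‖ = 1 ∧ ∃ t : ℝ, 0 ≤ t ∧ p.2 = t • p.1} := by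
  set E := EuclideanSpace ℝ (Fin i)
  -- rewrite the RHS as a manifestly closed set
  have hset : {p : E × E | ‖p.1‖ = 1 ∧ ∃ t : ℝ, 0 ≤ t ∧ p.2 = t • p.1}
      = {p : E × E | ‖p.1‖ = 1 ∧ p.2 = ‖p.2‖ • p.1} := by
    ext p
    constructor
    · rintro ⟨h1, t, ht, hp⟩
      refine ⟨h1, ?_⟩
      have : ‖p.2‖ = t := by rw [hp, norm_smul, h1, Real.norm_eq_abs, abs_of_nonneg ht, mul_one]
      rw [this, hp]
    · rintro ⟨h1, hp⟩
      exact ⟨h1, ‖p.2‖, norm_nonneg _, hp⟩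
  rw [hset]
  apply Set.Subset.antisymm
  · apply closure_minimal
    · rintro _ ⟨y, hy, rfl⟩
      have hy' : ‖y‖ ≠ 0 := norm_ne_zero_iff.mpr hy
      constructor
      · simp only [norm_smul, norm_inv, norm_norm]
        field_simp
      · simp only
        exact (smul_inv_smul₀ hy' y).symm
    · apply IsClosed.inter
      · exact isClosed_eq (continuous_fst.norm) continuous_const
      · exact isClosed_eq continuous_snd ((continuous_snd.norm).smul continuous_fst)
  · rintro ⟨x, y⟩ ⟨h1, hy⟩
    simp only at h1 hy
    -- y = ‖y‖ • x ; approximate by (‖y‖ + 1/(n+1)) • x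
    set t : ℝ := ‖y‖ with ht
    have hxne : x ≠ 0 := by
      intro h; rw [h, norm_zero] at h1; norm_num at h1
    have key : Filter.Tendsto
        (fun n : ℕ => ((‖((t + 1/(n+1)) • x)‖⁻¹ • ((t + 1/(n+1)) • x),
          ((t + 1/(n+1)) • x)) : E × E)) Filter.atTop (nhds (x, y)) := by
      have hpos : ∀ n : ℕ, (0 : ℝ) < t + 1/(n+1) := fun n => by positivity
      have hnorm : ∀ n : ℕ, ‖((t + 1/(n+1 : ℝ)) • x)‖ = t + 1/(n+1) := by
        intro n
        rw [norm_smul, h1, mul_one, Real.norm_eq_abs, abs_of_pos (hpos n)]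
      have hfst : ∀ n : ℕ, ‖((t + 1/(n+1 : ℝ)) • x)‖⁻¹ • ((t + 1/(n+1)) • x) = x := by
        intro n
        rw [hnorm n, smul_smul, inv_mul_cancel₀ (hpos n).ne', one_smul]
      have htend : Filter.Tendsto (fun n : ℕ => (t + 1/(n+1 : ℝ)) • x)
          Filter.atTop (nhds y) := by
        have h0 : Filter.Tendsto (fun n : ℕ => t + 1/(n+1 : ℝ)) Filter.atTop (nhds t) := by
          have := tendsto_one_div_add_atTop_nhds_zero_nat (𝕜 := ℝ)
          simpa using (tendsto_const_nhds.add this : Filter.Tendsto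
            (fun n : ℕ => t + 1/(n+1 : ℝ)) Filter.atTop (nhds (t + 0)))
        have := h0.smul_const x
        rwa [← hy] at this
      refine Filter.Tendsto.prodMk_nhds ?_ htend
      simpa only [hfst] using (tendsto_const_nhds : Filter.Tendsto (fun _ : ℕ => x)
        Filter.atTop (nhds x))
    refine mem_closure_of_tendsto key ?_
    filter_upwards with n
    refine ⟨(t + 1/(n+1)) • x, ?_, rfl⟩
    show (t + 1/(n+1 : ℝ)) • x ≠ 0
    exact smul_ne_zero (by positivity) hxne
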